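/- Let N ≥ 1, β ≥ 1, and let a : {1,…,N} → [0,1] with a* = min_{1≤t≤N} a_t. Then 0 ≤ (Σ_{t=1}^N a_t e^{−β a_t}) / (Σ_{t=1}^N e^{−β a_t}) − a* ≤ (N − 1) / (e β), where e is Euler's number. -/

import Mathlib

open scoped BigOperators

lemma gibbs_aux (β : ℝ) (hβ : 1 ≤ β) (x : ℝ) (hx : 0 ≤ x) :
    x * Real.exp (-β * x) ≤ 1 / (Real.exp 1 * β) := by
  have hβ0 : 0 < β := lt_of_lt_of_le one_pos hβ
  have hy : 0 ≤ β * x := mul_nonneg hβ0.le hx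
  have h1 : β * x ≤ Real.exp (β * x - 1) := by
    have := Real.add_one_le_exp (β * x - 1)
    linarith
  have h2 : (β * x) * Real.exp (-(β * x)) ≤ Real.exp (-1 : ℝ) := by
    calc (β * x) * Real.exp (-(β * x)) ≤ Real.exp (β * x - 1) * Real.exp (-(β * x)) :=
          mul_le_mul_of_nonneg_right h1 (Real.exp_nonneg _)
      _ = Real.exp (-1 : ℝ) := by rw [← Real.exp_add]; ring_nf
  have hrw : x * Real.exp (-β * x) = ((β * x) * Real.exp (-(β * x))) / β := by
    field_simp
  rw [hrw]
  rw [div_le_div_iff₀ hβ0 (by positivity)]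
  calc (β * x) * Real.exp (-(β * x)) * (Real.exp 1 * β)
      ≤ Real.exp (-1 : ℝ) * (Real.exp 1 * β) := by
        apply mul_le_mul_of_nonneg_right h2; positivity
    _ = 1 * β := by rw [← mul_assoc, ← Real.exp_add]; norm_num
    _ = 1 * β := rfl

/-- the Gibbs (softmin-weighted) mean of values `a₁, …, a_N ∈ [0,1]` at
inverse temperature `β ≥ 1` exceeds the minimum `a*` by at most `(N − 1)/(e β)`. -/
theorem gibbs_mean_close_to_min (N : ℕ) (hN : 1 ≤ N) (β : ℝ) (hβ : 1 ≤ β)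
    (a : Fin N → ℝ) (ha : ∀ t, a t ∈ Set.Icc (0 : ℝ) 1)
    (astar : ℝ) (hstar : IsLeast (Set.range a) astar) :
    0 ≤ (∑ t : Fin N, a t * Real.exp (-β * a t)) / (∑ t : Fin N, Real.exp (-β * a t)) - astar ∧
    (∑ t : Fin N, a t * Real.exp (-β * a t)) / (∑ t : Fin N, Real.exp (-β * a t)) - astar
      ≤ ((N : ℝ) - 1) / (Real.exp 1 * β) := by
  have hβ0 : 0 < β := lt_of_lt_of_le one_pos hβ
  obtain ⟨t0, ht0⟩ := hstar.1
  have hle : ∀ t, astar ≤ a t := fun t => hstar.2 ⟨t, rfl⟩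
  haveI : Nonempty (Fin N) := ⟨⟨0, hN⟩⟩
  set S : ℝ := ∑ t : Fin N, Real.exp (-β * a t) with hS
  have hSpos : 0 < S := Finset.sum_pos (fun t _ => Real.exp_pos _) Finset.univ_nonempty
  have hkey : (∑ t : Fin N, a t * Real.exp (-β * a t)) / S - astar
      = (∑ t : Fin N, (a t - astar) * Real.exp (-β * a t)) / S := by
    rw [eq_div_iff hSpos.ne', sub_mul, div_mul_cancel₀ _ hSpos.ne']
    rw [hS, Finset.mul_sum, ← Finset.sum_sub_distrib]
    congr 1; ext t; ring
  constructor
  · rw [hkey]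
    apply div_nonneg _ hSpos.le
    apply Finset.sum_nonneg
    intro t _
    exact mul_nonneg (by linarith [hle t]) (Real.exp_nonneg _)
  · rw [hkey]
    rw [div_le_div_iff₀ hSpos (by positivity)]
    have hterm : ∀ t, (a t - astar) * Real.exp (-β * a t)
        ≤ (1 / (Real.exp 1 * β)) * Real.exp (-β * astar) := by
      intro t
      have h1 : (a t - astar) * Real.exp (-β * (a t - astar)) ≤ 1 / (Real.exp 1 * β) :=
        gibbs_aux β hβ (a t - astar) (by linarith [hle t])
      have h2 : (a t - astar) * Real.exp (-β * a t)
          = ((a t - astar) * Real.exp (-β * (a t - astar))) * Real.exp (-β * astar) := by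
        rw [mul_assoc, ← Real.exp_add]; ring_nf
      rw [h2]
      exact mul_le_mul_of_nonneg_right h1 (Real.exp_nonneg _)
    have hnum : (∑ t : Fin N, (a t - astar) * Real.exp (-β * a t))
        ≤ ((N : ℝ) - 1) * ((1 / (Real.exp 1 * β)) * Real.exp (-β * astar)) := by
      rw [← Finset.add_sum_erase _ _ (Finset.mem_univ t0)]
      have ht0z : (a t0 - astar) * Real.exp (-β * a t0) = 0 := by
        rw [ht0]; ring
      rw [ht0z, zero_add]
      calc ∑ t ∈ Finset.univ.erase t0, (a t - astar) * Real.exp (-β * a t)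
          ≤ ∑ t ∈ Finset.univ.erase t0, (1 / (Real.exp 1 * β)) * Real.exp (-β * astar) :=
            Finset.sum_le_sum fun t _ => hterm t
        _ = ((N : ℝ) - 1) * ((1 / (Real.exp 1 * β)) * Real.exp (-β * astar)) := by
            rw [Finset.sum_const, Finset.card_erase_of_mem (Finset.mem_univ t0),
              Finset.card_univ, Fintype.card_fin, nsmul_eq_mul, Nat.cast_sub hN]
            push_cast; ring
    have hSlb : Real.exp (-β * astar) ≤ S := by
      rw [hS]
      calc Real.exp (-β * astar) = Real.exp (-β * a t0) := by rw [ht0]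
        _ ≤ ∑ t : Fin N, Real.exp (-β * a t) :=
            Finset.single_le_sum (f := fun t => Real.exp (-β * a t)) (fun t _ => Real.exp_nonneg _) (Finset.mem_univ t0)
    calc (∑ t : Fin N, (a t - astar) * Real.exp (-β * a t)) * (Real.exp 1 * β)
        ≤ (((N : ℝ) - 1) * ((1 / (Real.exp 1 * β)) * Real.exp (-β * astar))) * (Real.exp 1 * β) := by
          apply mul_le_mul_of_nonneg_right hnum; positivity
      _ = ((N : ℝ) - 1) * Real.exp (-β * astar) := by field_simp
      _ ≤ ((N : ℝ) - 1) * S := by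
          apply mul_le_mul_of_nonneg_left hSlb
          have : (1 : ℝ) ≤ (N : ℝ) := by exact_mod_cast hN
          linarith
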